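/- Let α = iθ with θ ∈ ℝ be a purely imaginary complex number and let f : ℝ → ℂ be Z-almost automorphic. If x : ℝ → ℂ is a bounded solution of x'(t) = α x(t) + f(t), i.e. a bounded continuous function satisfying x(t) = e^{iθt} x(0) + ∫₀ᵗ e^{iθ(t−s)} f(s) ds for all t ∈ ℝ, then x is almost automorphic. -/

import Mathlib

open MeasureTheory Filter Topology

/-- Bounded, piecewise continuous scalar function: continuous on ℝ ∖ ℤ with finite
one-sided limits at every integer. -/
def BddPCc (f : ℝ → ℂ) : Prop :=
  (∃ C : ℝ, ∀ t : ℝ, ‖f t‖ ≤ C) ∧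
  ContinuousOn f {t : ℝ | ∀ n : ℤ, t ≠ (n : ℝ)} ∧
  ∀ n : ℤ, (∃ L : ℂ, Tendsto f (𝓝[<] (n : ℝ)) (𝓝 L)) ∧
           (∃ R : ℂ, Tendsto f (𝓝[>] (n : ℝ)) (𝓝 R))

/-- `ℤ`-almost automorphic scalar functions. -/
def ZAlmostAutomorphicC (f : ℝ → ℂ) : Prop :=
  BddPCc f ∧
  ∀ s : ℕ → ℤ, ∃ (φ : ℕ → ℕ) (g : ℝ → ℂ), StrictMono φ ∧
    (∀ t : ℝ, Tendsto (fun n => f (t + (s (φ n) : ℝ))) atTop (𝓝 (g t))) ∧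
    (∀ t : ℝ, Tendsto (fun n => g (t - (s (φ n) : ℝ))) atTop (𝓝 (f t)))

/-- Almost automorphic scalar functions in the sense of Bochner. -/
def AlmostAutomorphicC (f : ℝ → ℂ) : Prop :=
  (∃ C : ℝ, ∀ t : ℝ, ‖f t‖ ≤ C) ∧ Continuous f ∧
  ∀ s : ℕ → ℝ, ∃ (φ : ℕ → ℕ) (g : ℝ → ℂ), StrictMono φ ∧
    (∀ t : ℝ, Tendsto (fun n => f (t + s (φ n))) atTop (𝓝 (g t))) ∧
    (∀ t : ℝ, Tendsto (fun n => g (t - s (φ n))) atTop (𝓝 (f t)))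

/-- If `α = iθ` is purely imaginary, `f` is `ℤ`-almost automorphic and `x` is a bounded
(continuous) solution of `x' = α x + f`, i.e.
`x(t) = e^{iθt} x(0) + ∫₀ᵗ e^{iθ(t-s)} f(s) ds`, then `x` is almost automorphic. -/

lemma aux_intervalIntegrable {h : ℝ → ℂ} {M : ℝ} (hm : AEStronglyMeasurable h volume)
    (hb : ∀ t, ‖h t‖ ≤ M) (a b : ℝ) : IntervalIntegrable h volume a b := by
  constructor <;>
    exact ⟨hm.restrict, HasFiniteIntegral.of_bounded (C := M) (ae_of_all _ hb)⟩

lemma tendsto_sub_seq {α : Type*} [TopologicalSpace α] {u : ℕ → α} {L : α}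
    (h : Tendsto u atTop (𝓝 L)) {φ : ℕ → ℕ} (hφ : StrictMono φ) :
    Tendsto (fun n => u (φ n)) atTop (𝓝 L) := h.comp hφ.tendsto_atTop

lemma squeeze_shift_lip {w : ℝ → ℂ} {M : ℝ}
    (hlip : ∀ a b : ℝ, ‖w b - w a‖ ≤ M * |b - a|)
    {b a : ℕ → ℝ} (hba : Tendsto (fun n => b n - a n) atTop (𝓝 0))
    {L : ℂ} (ha : Tendsto (fun n => w (a n)) atTop (𝓝 L)) :
    Tendsto (fun n => w (b n)) atTop (𝓝 L) := by
  have h0 : Tendsto (fun n => w (b n) - w (a n)) atTop (𝓝 0) := by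
    refine squeeze_zero_norm (fun n => hlip (a n) (b n)) ?_
    simpa using (hba.abs.const_mul M)
  have := h0.add ha
  simpa using this

lemma delta_le_real {y Y : ℝ → ℝ} {κ : ℕ → ℝ} {δ C : ℝ}
    (hyb : ∀ t, y t ≤ C)
    (HY : ∀ t, Tendsto (fun n => y (t + κ n)) atTop (𝓝 (Y t)))
    (Hback : ∀ t, Tendsto (fun n => Y (t - κ n)) atTop (𝓝 (y t + δ))) : δ ≤ 0 := by
  have hbdd : BddAbove (Set.range y) := ⟨C, by rintro _ ⟨t, rfl⟩; exact hyb t⟩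
  have hne : (Set.range y).Nonempty := ⟨y 0, 0, rfl⟩
  have hYle : ∀ s, Y s ≤ sSup (Set.range y) := fun s =>
    le_of_tendsto (HY s) (Eventually.of_forall fun n => le_csSup hbdd ⟨_, rfl⟩)
  have hyδ : ∀ t, y t + δ ≤ sSup (Set.range y) := fun t =>
    le_of_tendsto (Hback t) (Eventually.of_forall fun n => hYle _)
  have : sSup (Set.range y) ≤ sSup (Set.range y) - δ := by
    refine csSup_le hne ?_
    rintro _ ⟨t, rfl⟩
    linarith [hyδ t]
  linarith

lemma delta_zero_complex {y Y : ℝ → ℂ} {κ : ℕ → ℝ} {δ : ℂ} {C : ℝ}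
    (hyb : ∀ t, ‖y t‖ ≤ C)
    (HY : ∀ t, Tendsto (fun n => y (t + κ n)) atTop (𝓝 (Y t)))
    (Hback : ∀ t, Tendsto (fun n => Y (t - κ n)) atTop (𝓝 (y t + δ))) : δ = 0 := by
  have hre : ∀ t, |(y t).re| ≤ C := fun t =>
    le_trans (Complex.abs_re_le_norm _) (hyb t)
  have him : ∀ t, |(y t).im| ≤ C := fun t =>
    le_trans (Complex.abs_im_le_norm _) (hyb t)
  have h1 : δ.re ≤ 0 := by
    refine delta_le_real (y := fun t => (y t).re) (Y := fun t => (Y t).re) (κ := κ) (C := C)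
      (fun t => le_trans (le_abs_self _) (hre t))
      (fun t => (Complex.continuous_re.tendsto _).comp (HY t)) (fun t => ?_)
    simpa [Complex.add_re, Function.comp_def] using (Complex.continuous_re.tendsto _).comp (Hback t)
  have h2 : -δ.re ≤ 0 := by
    refine delta_le_real (y := fun t => -(y t).re) (Y := fun t => -(Y t).re) (κ := κ) (C := C)
      (fun t => le_trans (neg_le_abs _) (hre t))
      (fun t => ((Complex.continuous_re.tendsto _).comp (HY t)).neg) (fun t => ?_)
    rw [show -(y t).re + -δ.re = -δ.re + -(y t).re by ring]
    have := ((Complex.continuous_re.tendsto _).comp (Hback t)).neg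
    simpa [Complex.add_re, neg_add] using this
  have h3 : δ.im ≤ 0 := by
    refine delta_le_real (y := fun t => (y t).im) (Y := fun t => (Y t).im) (κ := κ) (C := C)
      (fun t => le_trans (le_abs_self _) (him t))
      (fun t => (Complex.continuous_im.tendsto _).comp (HY t)) (fun t => ?_)
    simpa [Complex.add_im, Function.comp_def] using (Complex.continuous_im.tendsto _).comp (Hback t)
  have h4 : -δ.im ≤ 0 := by
    refine delta_le_real (y := fun t => -(y t).im) (Y := fun t => -(Y t).im) (κ := κ) (C := C)
      (fun t => le_trans (neg_le_abs _) (him t))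
      (fun t => ((Complex.continuous_im.tendsto _).comp (HY t)).neg) (fun t => ?_)
    rw [show -(y t).im + -δ.im = -δ.im + -(y t).im by ring]
    have := ((Complex.continuous_im.tendsto _).comp (Hback t)).neg
    simpa [Complex.add_im, neg_add] using this
  have hre0 : δ.re = 0 := by linarith
  have him0 : δ.im = 0 := by linarith
  exact Complex.ext (by simpa using hre0) (by simpa using him0)

noncomputable def Eθ (θ : ℝ) (t : ℝ) : ℂ := Complex.exp ((θ : ℂ) * t * Complex.I)

lemma Eθ_norm (θ t : ℝ) : ‖Eθ θ t‖ = 1 := by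
  rw [Eθ, show (θ : ℂ) * t * Complex.I = ((θ * t : ℝ) : ℂ) * Complex.I by push_cast; ring,
    Complex.norm_exp_ofReal_mul_I]

lemma Eθ_add (θ a b : ℝ) : Eθ θ (a + b) = Eθ θ a * Eθ θ b := by
  rw [Eθ, Eθ, Eθ, ← Complex.exp_add]; congr 1; push_cast; ring

lemma Eθ_zero (θ : ℝ) : Eθ θ 0 = 1 := by rw [Eθ]; simp

lemma Eθ_inv (θ t : ℝ) : Eθ θ t * Eθ θ (-t) = 1 := by
  rw [← Eθ_add]; simp [Eθ_zero]

lemma Eθ_inv' (θ t : ℝ) : Eθ θ (-t) * Eθ θ t = 1 := by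
  rw [← Eθ_add]; simp [Eθ_zero]

lemma Eθ_cont (θ : ℝ) : Continuous (Eθ θ) :=
  Complex.continuous_exp.comp
    ((continuous_const.mul Complex.continuous_ofReal).mul continuous_const)

lemma core (θ : ℝ) (f g : ℝ → ℂ) (x y h : ℝ → ℂ) (M C : ℝ) (l c : ℂ) (r : ℝ)
    (σ K R : ℕ → ℝ)
    (hM : ∀ t, ‖f t‖ ≤ M)
    (hfm : AEStronglyMeasurable f volume)
    (hyb : ∀ t, ‖y t‖ ≤ C)
    (hxy : ∀ t, x t = Eθ θ t * y t)
    (hh : ∀ u, h u = Eθ θ (-u) * f u)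
    (hydiff : ∀ a b : ℝ, y b - y a = ∫ u in a..b, h u)
    (hylip : ∀ a b : ℝ, ‖y b - y a‖ ≤ M * |b - a|)
    (hsplit : ∀ n, σ n = K n + R n)
    (Hg1 : ∀ t, Tendsto (fun n => f (t + K n)) atTop (𝓝 (g t)))
    (Hg2 : ∀ t, Tendsto (fun n => g (t - K n)) atTop (𝓝 (f t)))
    (HL : Tendsto (fun n => Eθ θ (-K n)) atTop (𝓝 l))
    (HR : Tendsto R atTop (𝓝 r))
    (Hc : Tendsto (fun n => y (K n)) atTop (𝓝 c)) :
    ∃ (φ : ℕ → ℕ) (X : ℝ → ℂ), StrictMono φ ∧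
      (∀ t, Tendsto (fun n => x (t + σ (φ n))) atTop (𝓝 (X t))) ∧
      (∀ t, Tendsto (fun n => X (t - σ (φ n))) atTop (𝓝 (x t))) := by
  have hl1 : ‖l‖ = 1 := by
    have h1 : Tendsto (fun n => ‖Eθ θ (-K n)‖) atTop (𝓝 ‖l‖) := HL.norm
    have h2 : (fun n => ‖Eθ θ (-K n)‖) = fun _ => (1 : ℝ) := funext fun n => Eθ_norm θ _
    rw [h2] at h1
    exact tendsto_nhds_unique h1 tendsto_const_nhds
  have hl0 : l ≠ 0 := by
    intro h0; rw [h0, norm_zero] at hl1; norm_num at hl1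
  have HLinv : Tendsto (fun n => Eθ θ (K n)) atTop (𝓝 l⁻¹) := by
    have he : (fun n => Eθ θ (K n)) = fun n => (Eθ θ (-K n))⁻¹ :=
      funext fun n => eq_inv_of_mul_eq_one_left (Eθ_inv θ (K n))
    rw [he]
    exact HL.inv₀ hl0
  have hgb : ∀ t, ‖g t‖ ≤ M := fun t =>
    le_of_tendsto (Hg1 t).norm (Eventually.of_forall fun n => hM _)
  have hgm : AEStronglyMeasurable g volume :=
    aestronglyMeasurable_of_tendsto_ae atTop
      (fun n => hfm.comp_measurePreserving (measurePreserving_add_right volume (K n)))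
      (ae_of_all _ fun t => Hg1 t)
  have hgsm : ∀ a : ℝ, AEStronglyMeasurable (fun u => g (u - a)) volume := by
    intro a
    have := hgm.comp_measurePreserving (measurePreserving_add_right volume (-a))
    simpa [Function.comp_def, sub_eq_add_neg] using this
  obtain ⟨G, hGdef⟩ : ∃ G : ℝ → ℂ, G = fun u => l * (Eθ θ (-u) * g u) := ⟨_, rfl⟩
  have hGval : ∀ u, G u = l * (Eθ θ (-u) * g u) := fun u => by rw [hGdef]
  have hGb : ∀ u, ‖G u‖ ≤ M := by
    intro u
    rw [hGval, norm_mul, norm_mul, hl1, Eθ_norm, one_mul, one_mul]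
    exact hgb u
  have hGm : AEStronglyMeasurable G volume := by
    rw [hGdef]
    exact aestronglyMeasurable_const.mul
      ((((Eθ_cont θ).comp continuous_neg).aestronglyMeasurable).mul hgm)
  have hIG : ∀ a b : ℝ, IntervalIntegrable G volume a b := aux_intervalIntegrable hGm hGb
  obtain ⟨Y, hYdef⟩ : ∃ Y : ℝ → ℂ, Y = fun t => c + ∫ u in (0:ℝ)..t, G u := ⟨_, rfl⟩
  have hYval : ∀ t, Y t = c + ∫ u in (0:ℝ)..t, G u := fun t => by rw [hYdef]
  have hYdiff : ∀ a b : ℝ, Y b - Y a = ∫ u in a..b, G u := by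
    intro a b
    rw [hYval a, hYval b, show ∀ A B : ℂ, (c + A) - (c + B) = A - B from fun A B => by ring]
    exact intervalIntegral.integral_interval_sub_left (hIG 0 b) (hIG 0 a)
  have hYlip : ∀ a b : ℝ, ‖Y b - Y a‖ ≤ M * |b - a| := by
    intro a b
    rw [hYdiff]
    exact intervalIntegral.norm_integral_le_of_norm_le_const (fun u _ => hGb u)
  have HYlim : ∀ t, Tendsto (fun n => y (t + K n)) atTop (𝓝 (Y t)) := by
    intro t
    have key : ∀ n, y (t + K n) =
        y (K n) + ∫ u in (0:ℝ)..t, (Eθ θ (-K n) * (Eθ θ (-u) * f (u + K n))) := by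
      intro n
      have e2 : (∫ u in (0:ℝ)..t, h (u + K n)) = ∫ u in (0 + K n)..(t + K n), h u :=
        intervalIntegral.integral_comp_add_right h (K n)
      have e1 : y (t + K n) - y (K n) = ∫ u in (K n)..(t + K n), h u := hydiff _ _
      have e4 : y (t + K n) = y (K n) + ∫ u in (0:ℝ)..t, h (u + K n) := by
        rw [e2, zero_add, ← e1]; ring
      rw [e4]
      congr 1
      refine intervalIntegral.integral_congr fun u _ => ?_
      rw [hh, show -(u + K n) = -u + -K n from by ring, Eθ_add]
      ring
    simp only [key]
    rw [hYval t]
    refine Hc.add ?_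
    refine intervalIntegral.tendsto_integral_filter_of_dominated_convergence
      (bound := fun _ => M) ?_ ?_ ?_ ?_
    · exact Eventually.of_forall fun n =>
        (aestronglyMeasurable_const.mul
          ((((Eθ_cont θ).comp continuous_neg).aestronglyMeasurable).mul
            (hfm.comp_measurePreserving (measurePreserving_add_right volume (K n))))).restrict
    · refine Eventually.of_forall fun n => ae_of_all _ fun u _ => ?_
      rw [norm_mul, norm_mul, Eθ_norm, Eθ_norm, one_mul, one_mul]
      exact hM _
    · exact intervalIntegrable_const
    · refine ae_of_all _ fun u _ => ?_
      rw [hGval u]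
      exact HL.mul (tendsto_const_nhds.mul (Hg1 u))
  have HYb : ∀ t, ‖Y t‖ ≤ C := fun t =>
    le_of_tendsto (HYlim t).norm (Eventually.of_forall fun n => hyb _)
  obtain ⟨d, -, φ, hφ, hd⟩ := (isCompact_closedBall (0:ℂ) C).tendsto_subseq
    (x := fun n => Y (-K n)) (fun n => mem_closedBall_zero_iff.mpr (HYb _))
  have Hg2' : ∀ u, Tendsto (fun n => g (u - K (φ n))) atTop (𝓝 (f u)) := fun u =>
    tendsto_sub_seq (Hg2 u) hφ
  have HL' : Tendsto (fun n => Eθ θ (-K (φ n))) atTop (𝓝 l) := tendsto_sub_seq HL hφ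
  have HLinv' : Tendsto (fun n => Eθ θ (K (φ n))) atTop (𝓝 l⁻¹) := tendsto_sub_seq HLinv hφ
  have HR' : Tendsto (fun n => R (φ n)) atTop (𝓝 r) := tendsto_sub_seq HR hφ
  have HYlim' : ∀ t, Tendsto (fun n => y (t + K (φ n))) atTop (𝓝 (Y t)) := fun t =>
    tendsto_sub_seq (HYlim t) hφ
  have HbackΔ : ∀ t, Tendsto (fun n => Y (t - K (φ n))) atTop (𝓝 (y t + (d - y 0))) := by
    intro t
    have key : ∀ n, Y (t - K (φ n)) = Y (-K (φ n)) +
        ∫ u in (0:ℝ)..t, ((l * Eθ θ (K (φ n))) * (Eθ θ (-u) * g (u - K (φ n)))) := by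
      intro n
      have e1 : Y (t - K (φ n)) - Y (-K (φ n)) = ∫ u in (-K (φ n))..(t - K (φ n)), G u :=
        hYdiff _ _
      have e2 : (∫ u in (0:ℝ)..t, G (u - K (φ n))) =
          ∫ u in ((0:ℝ) - K (φ n))..(t - K (φ n)), G u :=
        intervalIntegral.integral_comp_sub_right G (K (φ n))
      have e4 : Y (t - K (φ n)) = Y (-K (φ n)) + ∫ u in (0:ℝ)..t, G (u - K (φ n)) := by
        rw [e2, zero_sub, ← e1]; ring
      rw [e4]
      congr 1
      refine intervalIntegral.integral_congr fun u _ => ?_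
      rw [hGval, show -(u - K (φ n)) = -u + K (φ n) from by ring, Eθ_add]
      ring
    simp only [key]
    have hint : Tendsto
        (fun n => ∫ u in (0:ℝ)..t, ((l * Eθ θ (K (φ n))) * (Eθ θ (-u) * g (u - K (φ n)))))
        atTop (𝓝 (∫ u in (0:ℝ)..t, h u)) := by
      refine intervalIntegral.tendsto_integral_filter_of_dominated_convergence
        (bound := fun _ => M) ?_ ?_ ?_ ?_
      · exact Eventually.of_forall fun n =>
          (aestronglyMeasurable_const.mul
            ((((Eθ_cont θ).comp continuous_neg).aestronglyMeasurable).mul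
              (hgsm (K (φ n))))).restrict
      · refine Eventually.of_forall fun n => ae_of_all _ fun u _ => ?_
        rw [norm_mul, norm_mul, norm_mul, hl1, Eθ_norm, Eθ_norm, one_mul, one_mul, one_mul]
        exact hgb _
      · exact intervalIntegrable_const
      · refine ae_of_all _ fun u _ => ?_
        rw [hh u]
        have hlim : Tendsto (fun n => (l * Eθ θ (K (φ n))) * (Eθ θ (-u) * g (u - K (φ n))))
            atTop (𝓝 ((l * l⁻¹) * (Eθ θ (-u) * f u))) :=
          (tendsto_const_nhds.mul HLinv').mul (tendsto_const_nhds.mul (Hg2' u))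
        rwa [mul_inv_cancel₀ hl0, one_mul] at hlim
    have hsum := hd.add hint
    have heq : d + ∫ u in (0:ℝ)..t, h u = y t + (d - y 0) := by
      rw [← hydiff 0 t]; ring
    rwa [heq] at hsum
  have hδ : d - y 0 = 0 := delta_zero_complex (C := C) hyb HYlim' HbackΔ
  have Hback : ∀ t, Tendsto (fun n => Y (t - K (φ n))) atTop (𝓝 (y t)) := by
    intro t
    have := HbackΔ t
    rwa [hδ, add_zero] at this
  obtain ⟨X, hXdef⟩ : ∃ X : ℝ → ℂ, X = fun t => (l⁻¹ * Eθ θ r) * (Eθ θ t * Y (t + r)) := ⟨_, rfl⟩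
  have hXval : ∀ t, X t = (l⁻¹ * Eθ θ r) * (Eθ θ t * Y (t + r)) := fun t => by rw [hXdef]
  refine ⟨φ, X, hφ, ?_, ?_⟩
  · intro t
    have key : ∀ n, x (t + σ (φ n)) =
        (Eθ θ t * (Eθ θ (K (φ n)) * Eθ θ (R (φ n)))) * y ((t + R (φ n)) + K (φ n)) := by
      intro n
      rw [hsplit (φ n), hxy, Eθ_add, Eθ_add,
        show t + (K (φ n) + R (φ n)) = (t + R (φ n)) + K (φ n) from by ring]
    simp only [key]
    have hER : Tendsto (fun n => Eθ θ (R (φ n))) atTop (𝓝 (Eθ θ r)) :=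
      ((Eθ_cont θ).tendsto r).comp HR'
    have hrr : Tendsto (fun n => ((t + R (φ n)) + K (φ n)) - ((t + r) + K (φ n)))
        atTop (𝓝 0) := by
      have heq : (fun n => ((t + R (φ n)) + K (φ n)) - ((t + r) + K (φ n)))
          = fun n => R (φ n) - r := funext fun n => by ring
      rw [heq]
      simpa using HR'.sub_const r
    have hylim2 : Tendsto (fun n => y ((t + R (φ n)) + K (φ n))) atTop (𝓝 (Y (t + r))) :=
      squeeze_shift_lip hylip hrr (HYlim' (t + r))
    have final := ((tendsto_const_nhds (x := Eθ θ t)).mul (HLinv'.mul hER)).mul hylim2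
    have heq2 : (Eθ θ t * (l⁻¹ * Eθ θ r)) * Y (t + r) = X t := by
      rw [hXval]; ring
    rwa [heq2] at final
  · intro t
    have key : ∀ n, X (t - σ (φ n)) = (l⁻¹ * Eθ θ r) *
        ((Eθ θ t * (Eθ θ (-K (φ n)) * Eθ θ (-R (φ n)))) * Y (((t + r) - R (φ n)) - K (φ n))) := by
      intro n
      rw [hXval, hsplit (φ n),
        show t - (K (φ n) + R (φ n)) = t + ((-K (φ n)) + (-R (φ n))) from by ring,
        Eθ_add, Eθ_add,
        show (t + ((-K (φ n)) + (-R (φ n)))) + r = ((t + r) - R (φ n)) - K (φ n) from by ring]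
    simp only [key]
    have hER' : Tendsto (fun n => Eθ θ (-R (φ n))) atTop (𝓝 (Eθ θ (-r))) :=
      ((Eθ_cont θ).tendsto _).comp HR'.neg
    have hrr2 : Tendsto (fun n => ((((t + r) - R (φ n)) - K (φ n)) - (t - K (φ n))))
        atTop (𝓝 0) := by
      have heq : (fun n => ((((t + r) - R (φ n)) - K (φ n)) - (t - K (φ n))))
          = fun n => r - R (φ n) := funext fun n => by ring
      rw [heq]
      simpa using HR'.const_sub r
    have hYlim2 : Tendsto (fun n => Y (((t + r) - R (φ n)) - K (φ n))) atTop (𝓝 (y t)) :=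
      squeeze_shift_lip hYlip hrr2 (Hback t)
    have final := (tendsto_const_nhds (x := l⁻¹ * Eθ θ r)).mul (((tendsto_const_nhds (x := Eθ θ t)).mul (HL'.mul hER')).mul hYlim2)
    have heq2 : (l⁻¹ * Eθ θ r) * ((Eθ θ t * (l * Eθ θ (-r))) * y t) = x t := by
      rw [hxy t]
      calc (l⁻¹ * Eθ θ r) * ((Eθ θ t * (l * Eθ θ (-r))) * y t)
          = (l⁻¹ * l) * ((Eθ θ r * Eθ θ (-r)) * (Eθ θ t * y t)) := by ring
        _ = Eθ θ t * y t := by rw [Eθ_inv, inv_mul_cancel₀ hl0, one_mul, one_mul]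
    rwa [heq2] at final

theorem bounded_solution_purely_imaginary_is_aa (θ : ℝ)
    (f : ℝ → ℂ) (hf : ZAlmostAutomorphicC f)
    (x : ℝ → ℂ) (hxb : ∃ C : ℝ, ∀ t : ℝ, ‖x t‖ ≤ C) (hxc : Continuous x)
    (hx : ∀ t : ℝ, x t = Complex.exp ((θ : ℂ) * t * Complex.I) * x 0 +
      ∫ s in (0:ℝ)..t, Complex.exp ((θ : ℂ) * (t - s) * Complex.I) * f s) :
    AlmostAutomorphicC x := by
  obtain ⟨⟨⟨M, hM⟩, hfc, -⟩, hZ⟩ := hf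
  obtain ⟨C, hC⟩ := hxb
  -- measurability of f
  have hSc : Set.Countable {t : ℝ | ∀ n : ℤ, t ≠ (n : ℝ)}ᶜ := by
    refine Set.Countable.mono ?_ (Set.countable_range ((↑) : ℤ → ℝ))
    intro t ht
    simp only [Set.mem_compl_iff, Set.mem_setOf_eq, not_forall, not_not] at ht
    obtain ⟨n, rfl⟩ := ht
    exact ⟨n, rfl⟩
  have hSm : MeasurableSet {t : ℝ | ∀ n : ℤ, t ≠ (n : ℝ)} := by
    rw [← compl_compl {t : ℝ | ∀ n : ℤ, t ≠ (n : ℝ)}]; exact hSc.measurableSet.compl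
  have hfm : AEStronglyMeasurable f volume := by
    have h1 : AEMeasurable f (volume.restrict {t : ℝ | ∀ n : ℤ, t ≠ (n : ℝ)}) :=
      hfc.aemeasurable hSm
    have h2 : volume.restrict {t : ℝ | ∀ n : ℤ, t ≠ (n : ℝ)} = volume := by
      refine Measure.restrict_eq_self_of_ae_mem ?_
      rw [MeasureTheory.ae_iff]
      simpa [Set.compl_def] using hSc.measure_zero volume
    rw [h2] at h1
    exact h1.aestronglyMeasurable
  -- reduction to y
  set y : ℝ → ℂ := fun t => Eθ θ (-t) * x t with hy0
  have hxy : ∀ t, x t = Eθ θ t * y t := by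
    intro t
    rw [hy0]; simp only
    rw [← mul_assoc, Eθ_inv, one_mul]
  have hyb : ∀ t, ‖y t‖ ≤ C := by
    intro t; rw [hy0]; simp only [norm_mul, Eθ_norm, one_mul]; exact hC t
  set h : ℝ → ℂ := fun u => Eθ θ (-u) * f u with hh
  have hhval : ∀ u, h u = Eθ θ (-u) * f u := fun u => by rw [hh]
  have hhb : ∀ u, ‖h u‖ ≤ M := by
    intro u; rw [hhval, norm_mul, Eθ_norm, one_mul]; exact hM u
  have hhm : AEStronglyMeasurable h volume :=
    (((Eθ_cont θ).comp continuous_neg).aestronglyMeasurable).mul hfm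
  have hIh : ∀ a b : ℝ, IntervalIntegrable h volume a b := aux_intervalIntegrable hhm hhb
  have hy : ∀ t, y t = x 0 + ∫ u in (0:ℝ)..t, h u := by
    intro t
    rw [hy0]; simp only
    rw [hx t, mul_add]
    congr 1
    · rw [← mul_assoc,
        show Eθ θ (-t) * Complex.exp ((θ : ℂ) * t * Complex.I) = 1 from Eθ_inv' θ t, one_mul]
    · rw [← intervalIntegral.integral_const_mul]
      refine intervalIntegral.integral_congr ?_
      intro u hu
      show Eθ θ (-t) * (Complex.exp ((θ : ℂ) * (↑t - ↑u) * Complex.I) * f u) = h u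
      have e1 : Complex.exp ((θ : ℂ) * (↑t - ↑u) * Complex.I) = Eθ θ (t - u) := by
        rw [Eθ]; congr 1; push_cast; ring
      rw [e1, ← mul_assoc, ← Eθ_add, show -t + (t - u) = -u from by ring, hhval]
  have hydiff : ∀ a b : ℝ, y b - y a = ∫ u in a..b, h u := by
    intro a b
    rw [hy a, hy b, show ∀ A B : ℂ, (x 0 + A) - (x 0 + B) = A - B from fun A B => by ring]
    exact intervalIntegral.integral_interval_sub_left (hIh 0 b) (hIh 0 a)
  have hylip : ∀ a b : ℝ, ‖y b - y a‖ ≤ M * |b - a| := by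
    intro a b
    rw [hydiff]
    exact intervalIntegral.norm_integral_le_of_norm_le_const (fun u _ => hhb u)
  -- the almost automorphy
  refine ⟨⟨C, hC⟩, hxc, ?_⟩
  intro s
  obtain ⟨φ₁, g, hφ₁, hg1, hg2⟩ := hZ (fun n => ⌊s n⌋)
  obtain ⟨r, -, φ₂, hφ₂, hr2⟩ := (isCompact_Icc (a := (0:ℝ)) (b := 1)).tendsto_subseq
    (x := fun n => Int.fract (s (φ₁ n)))
    (fun n => ⟨Int.fract_nonneg _, (Int.fract_lt_one _).le⟩)
  obtain ⟨l, -, φ₃, hφ₃, hl3⟩ := (isCompact_closedBall (0:ℂ) 1).tendsto_subseq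
    (x := fun n => Eθ θ (-((⌊s (φ₁ (φ₂ n))⌋ : ℤ) : ℝ)))
    (fun n => mem_closedBall_zero_iff.mpr (Eθ_norm θ _).le)
  obtain ⟨c, -, φ₄, hφ₄, hc4⟩ := (isCompact_closedBall (0:ℂ) C).tendsto_subseq
    (x := fun n => y (((⌊s (φ₁ (φ₂ (φ₃ n)))⌋ : ℤ) : ℝ)))
    (fun n => mem_closedBall_zero_iff.mpr (hyb _))
  obtain ⟨φ₅, X, hφ₅, hfw, hbw⟩ :=
    core θ f g x y h M C l c r
      (fun n => s (φ₁ (φ₂ (φ₃ (φ₄ n)))))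
      (fun n => ((⌊s (φ₁ (φ₂ (φ₃ (φ₄ n))))⌋ : ℤ) : ℝ))
      (fun n => Int.fract (s (φ₁ (φ₂ (φ₃ (φ₄ n))))))
      hM hfm hyb hxy hhval hydiff hylip
      (fun n => (Int.floor_add_fract _).symm)
      (fun t => tendsto_sub_seq (hg1 t) (hφ₂.comp (hφ₃.comp hφ₄)))
      (fun t => tendsto_sub_seq (hg2 t) (hφ₂.comp (hφ₃.comp hφ₄)))
      (tendsto_sub_seq hl3 hφ₄)
      (tendsto_sub_seq hr2 (hφ₃.comp hφ₄))
      hc4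
  exact ⟨fun n => φ₁ (φ₂ (φ₃ (φ₄ (φ₅ n)))), X,
    hφ₁.comp (hφ₂.comp (hφ₃.comp (hφ₄.comp hφ₅))), hfw, hbw⟩
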